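/- For every s ≥ 0, the matrix P(s) := P^b · (s·Hᵀ R⁻¹ H P^b + I)⁻¹ is symmetric and positive semidefinite. -/

import Mathlib

open Matrix

lemma my_psd_smul {n : ℕ} {M : Matrix (Fin n) (Fin n) ℝ} (hM : M.PosSemidef) {s : ℝ}
    (hs : 0 ≤ s) : (s • M).PosSemidef := by
  refine ⟨?_, fun x => ?_⟩
  · have := hM.1.eq
    rw [conjTranspose_eq_transpose_of_trivial] at this
    simp [Matrix.IsHermitian, conjTranspose_smul, conjTranspose_eq_transpose_of_trivial, this]
  · exact (hM.smul hs).2 x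

/-- If `M * B = B * N` with `M, N` invertible, then `B * N⁻¹ = M⁻¹ * B`. -/
lemma my_inv_comm {n : ℕ} {M B N : Matrix (Fin n) (Fin n) ℝ}
    (hM : IsUnit M.det) (hN : IsUnit N.det) (h : M * B = B * N) :
    B * N⁻¹ = M⁻¹ * B := by
  rw [← Matrix.one_mul (B * N⁻¹), ← Matrix.nonsing_inv_mul M hM, Matrix.mul_assoc,
    ← Matrix.mul_assoc M B N⁻¹, h, Matrix.mul_assoc, Matrix.mul_nonsing_inv _ hN,
    Matrix.mul_one]

/-- For every `s ≥ 0`, the matrix `P(s) := P^b (s·Hᵀ R⁻¹ H P^b + I)⁻¹` is symmetric and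
positive semidefinite. -/
theorem stmt_2 {N L : ℕ}
    (Pb : Matrix (Fin N) (Fin N) ℝ) (H : Matrix (Fin L) (Fin N) ℝ)
    (R : Matrix (Fin L) (Fin L) ℝ)
    (hPb : Pb.PosSemidef) (hR : R.PosDef)
    (P : ℝ → Matrix (Fin N) (Fin N) ℝ)
    (hP : ∀ s : ℝ, P s = Pb * (s • (Hᵀ * R⁻¹ * H * Pb) + 1)⁻¹) :
    ∀ s : ℝ, 0 ≤ s → (P s).IsSymm ∧ (P s).PosSemidef := by
  intro s hs
  set A : Matrix (Fin N) (Fin N) ℝ := Hᵀ * R⁻¹ * H with hA_def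
  set B : Matrix (Fin N) (Fin N) ℝ := (open scoped MatrixOrder in CFC.sqrt Pb) with hB_def
  have hB : B.PosSemidef := (open scoped MatrixOrder in (CFC.sqrt_nonneg Pb).posSemidef)
  have hBB : B * B = Pb := (open scoped MatrixOrder in CFC.sqrt_mul_sqrt_self Pb hPb.nonneg)
  have hBH : Bᴴ = B := hB.1.eq
  have hA : A.PosSemidef := by
    have : (Hᴴ * R⁻¹ * H).PosSemidef := hR.inv.posSemidef.conjTranspose_mul_mul_same H
    simpa [hA_def, conjTranspose_eq_transpose_of_trivial] using this
  have hBAB : (B * (s • A) * B).PosSemidef := by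
    have := (my_psd_smul hA hs).mul_mul_conjTranspose_same B
    rwa [hBH] at this
  -- C = 1 + B (s•A) B is positive definite
  have hC : (1 + B * (s • A) * B).PosDef :=
    Matrix.PosDef.add_posSemidef (Matrix.PosDef.one) hBAB
  set C : Matrix (Fin N) (Fin N) ℝ := 1 + B * (s • A) * B with hC_def
  have hCdet : IsUnit C.det := hC.det_pos.ne'.isUnit
  -- D = 1 + (s•A) B B = s • (A * Pb) + 1
  set D : Matrix (Fin N) (Fin N) ℝ := 1 + (s • A) * B * B with hD_def
  have hDdet : IsUnit D.det := by
    have : D.det = C.det := by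
      rw [hD_def, hC_def, Matrix.det_one_add_mul_comm (s • A * B) B, ← Matrix.mul_assoc]
    rw [this]; exact hCdet
  have hcomm : C * B = B * D := by
    rw [hC_def, hD_def]
    noncomm_ring
  have hkey : B * D⁻¹ = C⁻¹ * B := my_inv_comm hCdet hDdet hcomm
  have hPsD : s • (Hᵀ * R⁻¹ * H * Pb) + 1 = D := by
    rw [hD_def, ← hBB, hA_def]
    rw [Matrix.smul_mul, Matrix.smul_mul]
    noncomm_ring
  have hPs : P s = B * C⁻¹ * B := by
    rw [hP s, hPsD, ← hBB, Matrix.mul_assoc, hkey, ← Matrix.mul_assoc]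
  have hPsd : (P s).PosSemidef := by
    rw [hPs]
    have := hC.inv.posSemidef.mul_mul_conjTranspose_same B
    rwa [hBH] at this
  exact ⟨by simpa [Matrix.IsSymm, Matrix.conjTranspose_eq_transpose_of_trivial] using hPsd.1.eq,
    hPsd⟩
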